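/- Let H > 0, set R := π/(2√H), and let K : (0, R) → [−H, H] be a continuous function. Then: (i) any two differentiable functions h₁, h₂ : (0, R) → ℝ satisfying h_i′(x) + h_i(x)² + K(x) = 0 and h_i(x) = 1/x + O(x) as x → 0⁺ coincide on (0, R); and (ii) any two C² functions G₁, G₂ : (0, R) → ℝ satisfying G_i″(x) + K(x)·G_i(x) = 0 with G_i(x) → 0 and G_i(x)/x → 1 as x → 0⁺ coincide on (0, R). -/

import Mathlib

open Set


lemma gronwall_aux (E E' : ℝ → ℝ) (a b c : ℝ) (hab : a ≤ b)
    (hd : ∀ x ∈ Icc a b, HasDerivAt E (E' x) x)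
    (hE' : ∀ x ∈ Icc a b, E' x ≤ c * E x) :
    E b * Real.exp (-(c*b)) ≤ E a * Real.exp (-(c*a)) := by
  set g : ℝ → ℝ := fun y => E y * Real.exp (-(c*y)) with hgdef
  have hg : ∀ x ∈ Icc a b, HasDerivAt g ((E' x - c * E x) * Real.exp (-(c*x))) x := by
    intro x hx
    have h2 : HasDerivAt (fun y : ℝ => Real.exp (-(c*y))) (Real.exp (-(c*x)) * (-c)) x := by
      have : HasDerivAt (fun y : ℝ => -(c*y)) (-c) x := by
        exact (((hasDerivAt_id x).const_mul c).neg).congr_deriv (by simp)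
      simpa using this.exp
    have := (hd x hx).mul h2
    refine this.congr_deriv ?_
    ring
  have hanti : AntitoneOn g (Icc a b) := by
    apply antitoneOn_of_deriv_nonpos (convex_Icc a b)
    · intro x hx
      exact (hg x hx).continuousAt.continuousWithinAt
    · intro x hx
      rw [interior_Icc] at hx
      exact (hg x (Ioo_subset_Icc_self hx)).differentiableAt.differentiableWithinAt
    · intro x hx
      rw [interior_Icc] at hx
      rw [(hg x (Ioo_subset_Icc_self hx)).deriv]
      have h1 := hE' x (Ioo_subset_Icc_self hx)
      have h2 := Real.exp_pos (-(c*x))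
      nlinarith
  exact hanti (left_mem_Icc.2 hab) (right_mem_Icc.2 hab) hab

lemma riccati_unique (R : ℝ) (K : ℝ → ℝ)
    (h₁ h₂ h₁' h₂' : ℝ → ℝ)
    (hd1 : ∀ x ∈ Ioo (0:ℝ) R, HasDerivWithinAt h₁ (h₁' x) (Ioo 0 R) x)
    (hd2 : ∀ x ∈ Ioo (0:ℝ) R, HasDerivWithinAt h₂ (h₂' x) (Ioo 0 R) x)
    (he1 : ∀ x ∈ Ioo (0:ℝ) R, h₁' x + h₁ x ^ 2 + K x = 0)
    (he2 : ∀ x ∈ Ioo (0:ℝ) R, h₂' x + h₂ x ^ 2 + K x = 0)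
    (M₁ δ₁ : ℝ) (hM₁ : 0 < M₁) (hδ₁ : 0 < δ₁)
    (hb1 : ∀ x : ℝ, 0 < x → x ≤ δ₁ → |h₁ x - 1 / x| ≤ M₁ * x)
    (M₂ δ₂ : ℝ) (hM₂ : 0 < M₂) (hδ₂ : 0 < δ₂)
    (hb2 : ∀ x : ℝ, 0 < x → x ≤ δ₂ → |h₂ x - 1 / x| ≤ M₂ * x) :
    ∀ x ∈ Ioo (0:ℝ) R, h₁ x = h₂ x := by
  intro x hx
  obtain ⟨hx0, hxR⟩ := hx
  -- upgrade to HasDerivAt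
  have hd1' : ∀ y ∈ Ioo (0:ℝ) R, HasDerivAt h₁ (h₁' y) y := fun y hy =>
    (hd1 y hy).hasDerivAt (Ioo_mem_nhds hy.1 hy.2)
  have hd2' : ∀ y ∈ Ioo (0:ℝ) R, HasDerivAt h₂ (h₂' y) y := fun y hy =>
    (hd2 y hy).hasDerivAt (Ioo_mem_nhds hy.1 hy.2)
  set E : ℝ → ℝ := fun y => (h₁ y - h₂ y) ^ 2 with hEdef
  set E' : ℝ → ℝ := fun y => 2 * (h₁ y - h₂ y) * (h₁' y - h₂' y) with hE'def
  have hE : ∀ y ∈ Ioo (0:ℝ) R, HasDerivAt E (E' y) y := by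
    intro y hy
    have := ((hd1' y hy).sub (hd2' y hy)).pow 2
    refine this.congr_deriv ?_
    simp [hE'def]
  have hE'eq : ∀ y ∈ Ioo (0:ℝ) R, E' y = -2 * (h₁ y + h₂ y) * (h₁ y - h₂ y) ^ 2 := by
    intro y hy
    have e1 := he1 y hy
    have e2 := he2 y hy
    have : h₁' y - h₂' y = -(h₁ y + h₂ y) * (h₁ y - h₂ y) := by nlinarith
    simp only [hE'def, this]; ring
  set x₁ : ℝ := min x (min δ₁ (min δ₂ (min 1 (min (1/M₁) (1/M₂))))) with hx₁def
  have hx₁pos : 0 < x₁ := by positivity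
  have hx₁x : x₁ ≤ x := min_le_left _ _
  have hx₁δ₁ : x₁ ≤ δ₁ := le_trans (min_le_right _ _) (min_le_left _ _)
  have hx₁δ₂ : x₁ ≤ δ₂ := le_trans (min_le_right _ _) (le_trans (min_le_right _ _) (min_le_left _ _))
  have hx₁1 : x₁ ≤ 1 := le_trans (min_le_right _ _) (le_trans (min_le_right _ _) (le_trans (min_le_right _ _) (min_le_left _ _)))
  have hx₁M₁ : x₁ ≤ 1/M₁ := le_trans (min_le_right _ _) (le_trans (min_le_right _ _) (le_trans (min_le_right _ _) (le_trans (min_le_right _ _) (min_le_left _ _))))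
  have hx₁M₂ : x₁ ≤ 1/M₂ := le_trans (min_le_right _ _) (le_trans (min_le_right _ _) (le_trans (min_le_right _ _) (le_trans (min_le_right _ _) (min_le_right _ _))))
  -- nonnegativity of h₁ + h₂ on (0, x₁]
  have hpos : ∀ y : ℝ, 0 < y → y ≤ x₁ → 0 ≤ h₁ y + h₂ y := by
    intro y hy0 hyx₁
    have hy1 : y ≤ 1 := le_trans hyx₁ hx₁1
    have hinv : 1 ≤ 1 / y := (le_div_iff₀ hy0).2 (by linarith)
    have hM1y : M₁ * y ≤ 1 := by
      have : y ≤ 1 / M₁ := le_trans hyx₁ hx₁M₁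
      rw [le_div_iff₀ hM₁] at this; linarith
    have hM2y : M₂ * y ≤ 1 := by
      have : y ≤ 1 / M₂ := le_trans hyx₁ hx₁M₂
      rw [le_div_iff₀ hM₂] at this; linarith
    have b1 := abs_le.1 (hb1 y hy0 (le_trans hyx₁ hx₁δ₁))
    have b2 := abs_le.1 (hb2 y hy0 (le_trans hyx₁ hx₁δ₂))
    linarith [b1.1, b2.1]
  -- tendsto E → 0 at 0⁺
  have hEtendsto : Filter.Tendsto E (nhdsWithin 0 (Ioi 0)) (nhds 0) := by
    have hbound : ∀ᶠ a in nhdsWithin 0 (Ioi 0), |E a| ≤ ((M₁+M₂)*a)^2 := by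
      filter_upwards [Ioo_mem_nhdsGT_of_mem (Set.left_mem_Ico.2 (lt_min hδ₁ hδ₂))] with a ha
      obtain ⟨ha0, haδ⟩ := ha
      have b1 := hb1 a ha0 (le_of_lt (lt_of_lt_of_le haδ (min_le_left _ _)))
      have b2 := hb2 a ha0 (le_of_lt (lt_of_lt_of_le haδ (min_le_right _ _)))
      have habs : |h₁ a - h₂ a| ≤ (M₁+M₂)*a := by
        have : h₁ a - h₂ a = (h₁ a - 1/a) - (h₂ a - 1/a) := by ring
        rw [this]
        calc |(h₁ a - 1/a) - (h₂ a - 1/a)| ≤ |h₁ a - 1/a| + |h₂ a - 1/a| := abs_sub _ _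
        _ ≤ (M₁+M₂)*a := by linarith
      have : E a = |h₁ a - h₂ a|^2 := by simp [hEdef, sq_abs]
      rw [abs_of_nonneg (by positivity : (0:ℝ) ≤ E a), this]
      exact pow_le_pow_left₀ (abs_nonneg _) habs 2
    have hz : Filter.Tendsto (fun a : ℝ => ((M₁+M₂)*a)^2) (nhdsWithin 0 (Ioi 0)) (nhds 0) := by
      have hc : Continuous (fun a : ℝ => ((M₁+M₂)*a)^2) := by fun_prop
      have := hc.tendsto' 0 0 (by norm_num)
      exact this.mono_left nhdsWithin_le_nhds
    exact squeeze_zero_norm' hbound hz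
  -- Leg 1 : E x₁ = 0
  have hx₁R : x₁ < R := lt_of_le_of_lt hx₁x hxR
  have hEx₁ : E x₁ = 0 := by
    have key : ∀ᶠ a in nhdsWithin 0 (Ioi 0), E x₁ ≤ E a := by
      filter_upwards [Ioo_mem_nhdsGT_of_mem (Set.left_mem_Ico.2 hx₁pos)] with a ha
      obtain ⟨ha0, hax₁⟩ := ha
      have hsub : Icc a x₁ ⊆ Ioo (0:ℝ) R := fun z hz =>
        ⟨lt_of_lt_of_le ha0 hz.1, lt_of_le_of_lt hz.2 hx₁R⟩
      have := gronwall_aux E E' a x₁ 0 (le_of_lt hax₁)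
        (fun z hz => hE z (hsub hz))
        (fun z hz => by
          rw [hE'eq z (hsub hz)]
          have h1 := hpos z (hsub hz).1 hz.2
          have h2 : (0:ℝ) ≤ (h₁ z - h₂ z)^2 := sq_nonneg _
          nlinarith)
      simpa using this
    have h1 : E x₁ ≤ 0 := ge_of_tendsto hEtendsto key
    have h2 : 0 ≤ E x₁ := sq_nonneg _
    linarith
  -- Leg 2 : E x = 0
  have hsub2 : Icc x₁ x ⊆ Ioo (0:ℝ) R := fun z hz =>
    ⟨lt_of_lt_of_le hx₁pos hz.1, lt_of_le_of_lt hz.2 hxR⟩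
  have hcont : ContinuousOn (fun y => h₁ y + h₂ y) (Icc x₁ x) := by
    intro z hz
    exact ((hd1' z (hsub2 hz)).add (hd2' z (hsub2 hz))).continuousAt.continuousWithinAt
  obtain ⟨C, hC⟩ := isCompact_Icc.exists_bound_of_continuousOn hcont
  have hEx : E x = 0 := by
    have key := gronwall_aux E E' x₁ x (2 * max C 0) hx₁x
      (fun z hz => hE z (hsub2 hz))
      (fun z hz => by
        rw [hE'eq z (hsub2 hz)]
        have h1 := hC z hz
        rw [Real.norm_eq_abs] at h1
        have h2 : |h₁ z + h₂ z| ≤ max C 0 := le_trans h1 (le_max_left _ _)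
        have h3 := abs_le.1 h2
        have h4 : (0:ℝ) ≤ (h₁ z - h₂ z)^2 := sq_nonneg _
        have : E z = (h₁ z - h₂ z)^2 := rfl
        rw [this]
        nlinarith)
    rw [hEx₁] at key
    simp only [zero_mul] at key
    have h2 : 0 ≤ E x := sq_nonneg _
    have h3 := Real.exp_pos (-(2 * max C 0 * x))
    nlinarith
  have : (h₁ x - h₂ x)^2 = 0 := hEx
  have := pow_eq_zero_iff (n := 2) (by norm_num) |>.1 this
  linarith [sub_eq_zero.1 this]

lemma jacobi_unique (H : ℝ) (hH : 0 < H) (R : ℝ) (hRpos : 0 < R) (K : ℝ → ℝ)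
    (hKbound : ∀ x ∈ Ioo (0:ℝ) R, |K x| ≤ H)
    (G₁ G₂ G₁' G₂' G₁'' G₂'' : ℝ → ℝ)
    (hd1 : ∀ x ∈ Ioo (0:ℝ) R, HasDerivWithinAt G₁ (G₁' x) (Ioo 0 R) x)
    (hd2 : ∀ x ∈ Ioo (0:ℝ) R, HasDerivWithinAt G₂ (G₂' x) (Ioo 0 R) x)
    (hd1' : ∀ x ∈ Ioo (0:ℝ) R, HasDerivWithinAt G₁' (G₁'' x) (Ioo 0 R) x)
    (hd2' : ∀ x ∈ Ioo (0:ℝ) R, HasDerivWithinAt G₂' (G₂'' x) (Ioo 0 R) x)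
    (he1 : ∀ x ∈ Ioo (0:ℝ) R, G₁'' x + K x * G₁ x = 0)
    (he2 : ∀ x ∈ Ioo (0:ℝ) R, G₂'' x + K x * G₂ x = 0)
    (ht1 : Filter.Tendsto G₁ (nhdsWithin 0 (Ioi 0)) (nhds 0))
    (ht2 : Filter.Tendsto G₂ (nhdsWithin 0 (Ioi 0)) (nhds 0))
    (hs1 : Filter.Tendsto (fun x => G₁ x / x) (nhdsWithin 0 (Ioi 0)) (nhds 1))
    (hs2 : Filter.Tendsto (fun x => G₂ x / x) (nhdsWithin 0 (Ioi 0)) (nhds 1)) :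
    ∀ x ∈ Ioo (0:ℝ) R, G₁ x = G₂ x := by
  -- upgrade derivatives
  have hD1 : ∀ y ∈ Ioo (0:ℝ) R, HasDerivAt G₁ (G₁' y) y := fun y hy =>
    (hd1 y hy).hasDerivAt (Ioo_mem_nhds hy.1 hy.2)
  have hD2 : ∀ y ∈ Ioo (0:ℝ) R, HasDerivAt G₂ (G₂' y) y := fun y hy =>
    (hd2 y hy).hasDerivAt (Ioo_mem_nhds hy.1 hy.2)
  have hD1' : ∀ y ∈ Ioo (0:ℝ) R, HasDerivAt G₁' (G₁'' y) y := fun y hy =>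
    (hd1' y hy).hasDerivAt (Ioo_mem_nhds hy.1 hy.2)
  have hD2' : ∀ y ∈ Ioo (0:ℝ) R, HasDerivAt G₂' (G₂'' y) y := fun y hy =>
    (hd2' y hy).hasDerivAt (Ioo_mem_nhds hy.1 hy.2)
  set u : ℝ → ℝ := fun y => G₁ y - G₂ y with hu_def
  set u' : ℝ → ℝ := fun y => G₁' y - G₂' y with hu'_def
  set u'' : ℝ → ℝ := fun y => G₁'' y - G₂'' y with hu''_def
  have hDu : ∀ y ∈ Ioo (0:ℝ) R, HasDerivAt u (u' y) y := fun y hy =>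
    (hD1 y hy).sub (hD2 y hy)
  have hDu' : ∀ y ∈ Ioo (0:ℝ) R, HasDerivAt u' (u'' y) y := fun y hy =>
    (hD1' y hy).sub (hD2' y hy)
  have hueq : ∀ y ∈ Ioo (0:ℝ) R, u'' y = -(K y) * u y := by
    intro y hy
    have e1 := he1 y hy; have e2 := he2 y hy
    simp only [hu''_def, hu_def]; nlinarith
  -- u → 0
  have hu0 : Filter.Tendsto u (nhdsWithin 0 (Ioi 0)) (nhds 0) := by
    have := ht1.sub ht2; simpa using this
  -- u/x → 0
  have hux0 : Filter.Tendsto (fun y => u y / y) (nhdsWithin 0 (Ioi 0)) (nhds 0) := by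
    have := hs1.sub hs2
    simp only [sub_self] at this
    refine this.congr (fun y => ?_)
    simp [hu_def, sub_div]
  -- a₀ : |u| ≤ 1 on (0, a₀], a₀ < R
  obtain ⟨d₀, hd₀pos, hd₀⟩ := Metric.tendsto_nhdsWithin_nhds.1 hu0 1 one_pos
  set a₀ : ℝ := min (d₀/2) (R/2) with ha₀def
  have ha₀pos : 0 < a₀ := by positivity
  have ha₀R : a₀ < R := lt_of_le_of_lt (min_le_right _ _) (by linarith)
  have hu''bd : ∀ z : ℝ, 0 < z → z ≤ a₀ → |u'' z| ≤ H := by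
    intro z hz0 hza₀
    have hzR : z < R := lt_of_le_of_lt hza₀ ha₀R
    have hzd : dist z 0 < d₀ := by
      rw [Real.dist_eq, sub_zero, abs_of_pos hz0]
      exact lt_of_le_of_lt hza₀ (lt_of_le_of_lt (min_le_left _ _) (by linarith))
    have h1 : |u z| ≤ 1 := by
      have := hd₀ (mem_Ioi.2 hz0) hzd
      rw [Real.dist_eq, sub_zero] at this
      exact le_of_lt this
    rw [hueq z ⟨hz0, hzR⟩, abs_mul, abs_neg]
    calc |K z| * |u z| ≤ H * 1 :=
      mul_le_mul (hKbound z ⟨hz0, hzR⟩) h1 (abs_nonneg _) (le_of_lt hH)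
    _ = H := mul_one H
  -- u' → 0
  have hu'0 : Filter.Tendsto u' (nhdsWithin 0 (Ioi 0)) (nhds 0) := by
    rw [Metric.tendsto_nhdsWithin_nhds]
    intro ε hε
    obtain ⟨d₁, hd₁pos, hd₁⟩ := Metric.tendsto_nhdsWithin_nhds.1 hux0 (ε/8) (by positivity)
    refine ⟨min (d₁/2) (min (a₀/2) (ε/(8*(H+1)))), by positivity, ?_⟩
    intro y hy hyd
    rw [mem_Ioi] at hy
    rw [Real.dist_eq, sub_zero, abs_of_pos hy] at hyd
    have hyd₁ : 2*y < d₁ := by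
      have := lt_of_lt_of_le hyd (min_le_left _ _); linarith
    have hya₀ : 2*y < a₀ := by
      have := lt_of_lt_of_le hyd (le_trans (min_le_right _ _) (min_le_left _ _)); linarith
    have hyε : y < ε/(8*(H+1)) :=
      lt_of_lt_of_le hyd (le_trans (min_le_right _ _) (min_le_right _ _))
    have hsub : Icc y (2*y) ⊆ Ioo (0:ℝ) R := fun z hz =>
      ⟨lt_of_lt_of_le hy hz.1, lt_of_le_of_lt hz.2 (lt_trans hya₀ ha₀R)⟩
    -- bound on |u z| for z ∈ {y, 2y}
    have hubd : ∀ z : ℝ, 0 < z → z < d₁ → |u z| ≤ z * (ε/8) := by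
      intro z hz0 hzd
      have := hd₁ (mem_Ioi.2 hz0) (by rw [Real.dist_eq, sub_zero, abs_of_pos hz0]; exact hzd)
      rw [Real.dist_eq, sub_zero, abs_div, abs_of_pos hz0] at this
      rw [div_lt_iff₀ hz0] at this
      linarith [this]
    -- MVT 1
    obtain ⟨ξ, hξ, hξeq⟩ := exists_hasDerivAt_eq_slope u u' (by linarith : y < 2*y)
      (fun z hz => (hDu z (hsub hz)).continuousAt.continuousWithinAt)
      (fun z hz => hDu z (hsub (Ioo_subset_Icc_self hz)))
    -- MVT 2
    have hsub2 : Icc y ξ ⊆ Ioo (0:ℝ) R := fun z hz =>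
      hsub ⟨hz.1, le_trans hz.2 (le_of_lt hξ.2)⟩
    obtain ⟨η, hη, hηeq⟩ := exists_hasDerivAt_eq_slope u' u'' hξ.1
      (fun z hz => (hDu' z (hsub2 hz)).continuousAt.continuousWithinAt)
      (fun z hz => hDu' z (hsub2 (Ioo_subset_Icc_self hz)))
    -- assemble
    have hξbd : |u' ξ| ≤ 3*ε/8 := by
      rw [hξeq]
      have h2y : |u (2*y)| ≤ (2*y) * (ε/8) := hubd (2*y) (by linarith) hyd₁
      have h1y : |u y| ≤ y * (ε/8) := hubd y hy (by linarith)
      have hden : (2*y - y) = y := by ring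
      rw [hden, abs_div, abs_of_pos hy, div_le_iff₀ hy]
      calc |u (2*y) - u y| ≤ |u (2*y)| + |u y| := abs_sub _ _
      _ ≤ (2*y)*(ε/8) + y*(ε/8) := by linarith
      _ = 3*ε/8*y := by ring
    have hηbd : |u'' η| ≤ H := by
      refine hu''bd η (lt_trans hy hη.1) ?_
      have : η < ξ := hη.2
      have : ξ < 2*y := hξ.2
      linarith [hη.2, hξ.2, hya₀]
    have hstep : |u' y| ≤ |u' ξ| + H * (ξ - y) := by
      have : u' y = u' ξ - u'' η * (ξ - y) := by
        have hne : ξ - y ≠ 0 := ne_of_gt (by linarith [hξ.1])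
        field_simp at hηeq
        nlinarith [hηeq]
      rw [this]
      calc |u' ξ - u'' η * (ξ - y)| ≤ |u' ξ| + |u'' η * (ξ - y)| := abs_sub _ _
      _ ≤ |u' ξ| + H * (ξ - y) := by
          rw [abs_mul, abs_of_pos (by linarith [hξ.1] : (0:ℝ) < ξ - y)]
          have := mul_le_mul_of_nonneg_right hηbd (le_of_lt (by linarith [hξ.1] : (0:ℝ) < ξ - y))
          linarith
    rw [Real.dist_eq, sub_zero]
    have hHy : H * (ξ - y) ≤ H * y := by
      have : ξ - y ≤ y := by linarith [hξ.2]
      exact mul_le_mul_of_nonneg_left this (le_of_lt hH)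
    have : H * y < ε / 8 := by
      have h1 : H * y < H * (ε/(8*(H+1))) := by
        exact mul_lt_mul_of_pos_left hyε hH
      have h2 : H * (ε/(8*(H+1))) < ε/8 := by
        have ht : ε/(8*(H+1)) * (8*(H+1)) = ε := div_mul_cancel₀ _ (by positivity)
        have htpos : 0 < ε/(8*(H+1)) := by positivity
        nlinarith
      linarith
    calc |u' y| ≤ |u' ξ| + H * (ξ - y) := hstep
    _ ≤ 3*ε/8 + H*y := by linarith
    _ < ε := by linarith
  -- Energy argument
  set E : ℝ → ℝ := fun y => u y ^ 2 + u' y ^ 2 with hEdef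
  set E' : ℝ → ℝ := fun y => 2 * u y * u' y + 2 * u' y * u'' y with hE'def
  have hDE : ∀ y ∈ Ioo (0:ℝ) R, HasDerivAt E (E' y) y := by
    intro y hy
    have := ((hDu y hy).pow 2).add ((hDu' y hy).pow 2)
    refine this.congr_deriv ?_
    simp [hE'def]
  have hE'le : ∀ y ∈ Ioo (0:ℝ) R, E' y ≤ (1+H) * E y := by
    intro y hy
    rw [hE'def]
    simp only
    rw [hueq y hy]
    have hK := abs_le.1 (hKbound y hy)
    have h1 : 2 * u y * u' y + 2 * u' y * (-(K y) * u y) = 2 * u y * u' y * (1 - K y) := by ring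
    rw [h1]
    have h2 : |2 * u y * u' y| ≤ u y ^2 + u' y ^2 := by
      rw [abs_le]
      constructor
      · nlinarith [sq_nonneg (u y + u' y)]
      · nlinarith [sq_nonneg (u y - u' y)]
    have h3 : |1 - K y| ≤ 1 + H := by
      rw [abs_le]; constructor <;> linarith
    calc 2 * u y * u' y * (1 - K y) ≤ |2 * u y * u' y * (1 - K y)| := le_abs_self _
    _ = |2 * u y * u' y| * |1 - K y| := abs_mul _ _
    _ ≤ (u y ^2 + u' y ^2) * (1 + H) :=
        mul_le_mul h2 h3 (abs_nonneg _) (by positivity)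
    _ = (1+H) * E y := by rw [hEdef]; ring
  have hE0 : Filter.Tendsto E (nhdsWithin 0 (Ioi 0)) (nhds 0) := by
    have := (hu0.pow 2).add (hu'0.pow 2)
    simpa using this
  intro x hx
  obtain ⟨hx0, hxR⟩ := hx
  have hEx : E x = 0 := by
    have key : ∀ᶠ a in nhdsWithin 0 (Ioi 0), E x * Real.exp (-((1+H)*x)) ≤ E a := by
      filter_upwards [Ioo_mem_nhdsGT_of_mem (Set.left_mem_Ico.2 hx0)] with a ha
      obtain ⟨ha0, hax⟩ := ha
      have hsub : Icc a x ⊆ Ioo (0:ℝ) R := fun z hz =>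
        ⟨lt_of_lt_of_le ha0 hz.1, lt_of_le_of_lt hz.2 hxR⟩
      have := gronwall_aux E E' a x (1+H) (le_of_lt hax)
        (fun z hz => hDE z (hsub hz))
        (fun z hz => hE'le z (hsub hz))
      have hexp : Real.exp (-((1+H)*a)) ≤ 1 := by
        rw [Real.exp_le_one_iff]
        nlinarith
      have hEa : 0 ≤ E a := by positivity
      nlinarith [this, mul_le_mul_of_nonneg_left hexp hEa]
    have h1 : E x * Real.exp (-((1+H)*x)) ≤ 0 := ge_of_tendsto hE0 key
    have h2 : (0:ℝ) ≤ E x := by positivity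
    have h3 := Real.exp_pos (-((1+H)*x))
    nlinarith
  have h4 : u x = 0 := by
    have h2 : (0:ℝ) ≤ u x ^2 := sq_nonneg _
    have h3 : (0:ℝ) ≤ u' x ^2 := sq_nonneg _
    have : u x ^ 2 = 0 := by
      have : u x ^2 + u' x ^2 = 0 := hEx
      linarith
    exact pow_eq_zero_iff (by norm_num) |>.1 this
  simpa [hu_def, sub_eq_zero] using h4

/-- Uniqueness of solutions to the Riccati and Jacobi equations with the standard
initial behaviour at `0`, on the interval `(0, π/(2√H))`. -/
theorem riccati_jacobi_uniqueness (H : ℝ) (hH : 0 < H) (R : ℝ)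
    (hR : R = Real.pi / (2 * Real.sqrt H))
    (K : ℝ → ℝ) (hKcont : ContinuousOn K (Ioo 0 R))
    (hKbound : ∀ x ∈ Ioo (0:ℝ) R, |K x| ≤ H) :
    (∀ h₁ h₂ h₁' h₂' : ℝ → ℝ,
      (∀ x ∈ Ioo (0:ℝ) R, HasDerivWithinAt h₁ (h₁' x) (Ioo 0 R) x) →
      (∀ x ∈ Ioo (0:ℝ) R, HasDerivWithinAt h₂ (h₂' x) (Ioo 0 R) x) →
      (∀ x ∈ Ioo (0:ℝ) R, h₁' x + h₁ x ^ 2 + K x = 0) →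
      (∀ x ∈ Ioo (0:ℝ) R, h₂' x + h₂ x ^ 2 + K x = 0) →
      (∃ M δ : ℝ, 0 < M ∧ 0 < δ ∧ ∀ x : ℝ, 0 < x → x ≤ δ → |h₁ x - 1 / x| ≤ M * x) →
      (∃ M δ : ℝ, 0 < M ∧ 0 < δ ∧ ∀ x : ℝ, 0 < x → x ≤ δ → |h₂ x - 1 / x| ≤ M * x) →
      ∀ x ∈ Ioo (0:ℝ) R, h₁ x = h₂ x) ∧
    (∀ G₁ G₂ G₁' G₂' G₁'' G₂'' : ℝ → ℝ,
      (∀ x ∈ Ioo (0:ℝ) R, HasDerivWithinAt G₁ (G₁' x) (Ioo 0 R) x) →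
      (∀ x ∈ Ioo (0:ℝ) R, HasDerivWithinAt G₂ (G₂' x) (Ioo 0 R) x) →
      (∀ x ∈ Ioo (0:ℝ) R, HasDerivWithinAt G₁' (G₁'' x) (Ioo 0 R) x) →
      (∀ x ∈ Ioo (0:ℝ) R, HasDerivWithinAt G₂' (G₂'' x) (Ioo 0 R) x) →
      ContinuousOn G₁'' (Ioo 0 R) → ContinuousOn G₂'' (Ioo 0 R) →
      (∀ x ∈ Ioo (0:ℝ) R, G₁'' x + K x * G₁ x = 0) →
      (∀ x ∈ Ioo (0:ℝ) R, G₂'' x + K x * G₂ x = 0) →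
      Filter.Tendsto G₁ (nhdsWithin 0 (Ioi 0)) (nhds 0) →
      Filter.Tendsto G₂ (nhdsWithin 0 (Ioi 0)) (nhds 0) →
      Filter.Tendsto (fun x => G₁ x / x) (nhdsWithin 0 (Ioi 0)) (nhds 1) →
      Filter.Tendsto (fun x => G₂ x / x) (nhdsWithin 0 (Ioi 0)) (nhds 1) →
      ∀ x ∈ Ioo (0:ℝ) R, G₁ x = G₂ x) := by
  have hRpos : 0 < R := by
    rw [hR]
    exact div_pos Real.pi_pos (by positivity)
  constructor
  · rintro h₁ h₂ h₁' h₂' hd1 hd2 he1 he2 ⟨M₁, δ₁, hM₁, hδ₁, hb1⟩ ⟨M₂, δ₂, hM₂, hδ₂, hb2⟩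
    exact riccati_unique R K h₁ h₂ h₁' h₂' hd1 hd2 he1 he2 M₁ δ₁ hM₁ hδ₁ hb1 M₂ δ₂ hM₂ hδ₂ hb2
  · intro G₁ G₂ G₁' G₂' G₁'' G₂'' hd1 hd2 hd1' hd2' _ _ he1 he2 ht1 ht2 hs1 hs2
    exact jacobi_unique H hH R hRpos K hKbound G₁ G₂ G₁' G₂' G₁'' G₂'' hd1 hd2 hd1' hd2' he1 he2 ht1 ht2 hs1 hs2
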